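/- Let X and Y be real normed spaces, A ⊆ X nonempty compact convex, B ⊆ Y nonempty convex, and f : X × Y → ℝ a real-valued function such that x ↦ f(x,y) is concave and upper semicontinuous for each y ∈ B, and y ↦ f(x,y) is convex for each x ∈ A. Then sup_{x∈A} inf_{y∈B} f(x,y) = inf_{y∈B} sup_{x∈A} f(x,y), and the supremum on the left is attained. -/

import Mathlib

open Filter Topology

/-- Finite Ky Fan lemma via Hahn-Banach separation. -/
lemma fan_finlem {X Y : Type*} [NormedAddCommGroup X] [NormedSpace ℝ X]
    [NormedAddCommGroup Y] [NormedSpace ℝ Y]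
    (f : X → Y → ℝ) (A : Set X) (B : Set Y)
    (hA : A.Nonempty) (hAconv : Convex ℝ A) (hBconv : Convex ℝ B)
    (hconc : ∀ y ∈ B, ConcaveOn ℝ A (fun x => f x y))
    (hconv : ∀ x ∈ A, ConvexOn ℝ B (f x))
    {ι : Type*} [Fintype ι] (y : ι → Y) (hy : ∀ i, y i ∈ B) (r : ℝ)
    (H : ∀ z ∈ B, ∃ x ∈ A, r < f x z) :
    ∃ x ∈ A, ∀ i, r < f x (y i) := by
  classical
  by_contra hcon
  push_neg at hcon
  obtain ⟨x₀, hx₀⟩ := hA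
  have hne : Nonempty ι := by
    rcases hcon x₀ hx₀ with ⟨i, _⟩; exact ⟨i⟩
  set K : Set (ι → ℝ) := {z | ∃ x ∈ A, ∀ i, z i ≤ f x (y i)} with hK
  set U : Set (ι → ℝ) := {w | ∀ i, r < w i} with hUdef
  have hKconv : Convex ℝ K := by
    rintro z ⟨x₁, hx₁, hz⟩ w ⟨x₂, hx₂, hw⟩ a b ha hb hab
    refine ⟨a • x₁ + b • x₂, hAconv hx₁ hx₂ ha hb hab, fun i => ?_⟩
    have h2 := (hconc (y i) (hy i)).2 hx₁ hx₂ ha hb hab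
    have h1 : a * z i + b * w i ≤ a * f x₁ (y i) + b * f x₂ (y i) := by
      gcongr
      · exact hz i
      · exact hw i
    simp only [Pi.add_apply, Pi.smul_apply, smul_eq_mul] at *
    linarith
  have hUopen : IsOpen U := by
    have : U = ⋂ i, (fun w : ι → ℝ => w i) ⁻¹' Set.Ioi r := by
      ext w; simp [hUdef, Set.mem_iInter]
    rw [this]
    exact isOpen_iInter_of_finite fun i => (isOpen_Ioi).preimage (continuous_apply i)
  have hUconv : Convex ℝ U := by
    have : U = ⋂ i, (LinearMap.proj i : (ι → ℝ) →ₗ[ℝ] ℝ) ⁻¹' Set.Ioi r := by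
      ext w; simp [hUdef, Set.mem_iInter]
    rw [this]
    exact convex_iInter fun i => (convex_Ioi r).linear_preimage _
  have hdisj : Disjoint U K := by
    rw [Set.disjoint_left]
    rintro z hzU ⟨x, hx, hz⟩
    obtain ⟨i, hi⟩ := hcon x hx
    exact lt_irrefl r (((hzU i).trans_le (hz i)).trans_le hi)
  obtain ⟨φ, α, hU, hKle⟩ := geometric_hahn_banach_open hUconv hUopen hKconv hdisj
  set lam : ι → ℝ := fun i => -φ (Pi.single i 1) with hlam
  have hz₀K : (fun i => f x₀ (y i)) ∈ K := ⟨x₀, hx₀, fun i => le_rfl⟩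
  have hαz₀ : α ≤ φ (fun i => f x₀ (y i)) := hKle _ hz₀K
  have hlam_nonneg : ∀ i, 0 ≤ lam i := by
    intro i
    by_contra h
    push_neg at h
    have hp : 0 < φ (Pi.single i 1) := by
      simp only [hlam] at h; linarith
    set t := (φ (fun i => f x₀ (y i)) - α + 1) / φ (Pi.single i 1) with ht
    have htpos : 0 < t := div_pos (by linarith) hp
    have hmem : ((fun i => f x₀ (y i)) - t • (Pi.single i 1 : ι → ℝ)) ∈ K := by
      refine ⟨x₀, hx₀, fun j => ?_⟩
      have : (0:ℝ) ≤ t * (Pi.single i 1 : ι → ℝ) j := by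
        apply mul_nonneg htpos.le
        rcases eq_or_ne j i with rfl | hji
        · simp
        · simp [Pi.single_apply, hji]
      simp only [Pi.sub_apply, Pi.smul_apply, smul_eq_mul]
      linarith
    have h2 := hKle _ hmem
    rw [map_sub, map_smul, smul_eq_mul] at h2
    have h3 : t * φ (Pi.single i 1) = φ (fun i => f x₀ (y i)) - α + 1 := by
      rw [ht]; exact div_mul_cancel₀ _ hp.ne'
    linarith
  have hphi : ∀ w : ι → ℝ, φ w = -∑ i, lam i * w i := by
    intro w
    have hw : ∑ i, w i • (Pi.single i 1 : ι → ℝ) = w := by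
      ext j
      simp [Pi.single_apply]
    calc φ w = φ (∑ i, w i • (Pi.single i 1 : ι → ℝ)) := by rw [hw]
      _ = ∑ i, w i • φ ((Pi.single i 1 : ι → ℝ)) := by rw [map_sum]; simp
      _ = -∑ i, lam i * w i := by
          rw [← Finset.sum_neg_distrib]
          exact Finset.sum_congr rfl fun i _ => by simp [hlam]; ring
  have hsnn : 0 ≤ ∑ i, lam i := Finset.sum_nonneg fun i _ => hlam_nonneg i
  have hspos : 0 < ∑ i, lam i := by
    rcases hsnn.lt_or_eq with h | h
    · exact h
    have hz : ∀ i, lam i = 0 := by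
      intro i
      have := (Finset.sum_eq_zero_iff_of_nonneg fun i _ => hlam_nonneg i).1 h.symm
      exact this i (Finset.mem_univ i)
    have h1 : φ (fun _ => r + 1) < α := hU _ (fun i => by simp)
    rw [hphi] at h1 hαz₀
    simp [hz] at h1 hαz₀
    linarith
  set s := ∑ i, lam i with hs
  set μ : ι → ℝ := fun i => lam i / s with hμ
  have hμsum : ∑ i, μ i = 1 := by
    rw [hμ, ← Finset.sum_div]
    field_simp
    exact hs.symm
  have hμnn : ∀ i, 0 ≤ μ i := fun i => div_nonneg (hlam_nonneg i) hsnn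
  have hyB : (∑ i, μ i • y i) ∈ B :=
    hBconv.sum_mem (fun i _ => hμnn i) hμsum (fun i _ => hy i)
  obtain ⟨x, hx, hrx⟩ := H _ hyB
  have hjensen : f x (∑ i, μ i • y i) ≤ ∑ i, μ i * f x (y i) :=
    (hconv x hx).map_sum_le (fun i _ => hμnn i) hμsum (fun i _ => hy i)
  have hzK : (fun i => f x (y i)) ∈ K := ⟨x, hx, fun i => le_rfl⟩
  have h3 : α ≤ -∑ i, lam i * f x (y i) := by rw [← hphi]; exact hKle _ hzK
  have h4 : -α ≤ r * s := by
    by_contra h4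
    push_neg at h4
    set ε := (-α - r * s) / (2 * s) with hε
    have hεpos : 0 < ε := div_pos (by linarith) (by linarith)
    have h5 : φ (fun _ => r + ε) < α := hU _ (fun i => by simp [hεpos])
    rw [hphi] at h5
    have h6 : ∑ i, lam i * (r + ε) = (r + ε) * s := by
      rw [hs, Finset.mul_sum]
      exact Finset.sum_congr rfl fun i _ => by ring
    rw [h6] at h5
    have h7 : ε * s = (-α - r * s) / 2 := by
      rw [hε]; field_simp
    nlinarith
  have h8 : ∑ i, μ i * f x (y i) = (∑ i, lam i * f x (y i)) / s := by
    rw [Finset.sum_div]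
    exact Finset.sum_congr rfl fun i _ => by rw [hμ]; ring
  have h9 : (∑ i, lam i * f x (y i)) / s ≤ r := by
    rw [div_le_iff₀ hspos]
    linarith
  linarith [hjensen, hrx, h8 ▸ h9]


lemma fan_closed_section {X : Type*} [TopologicalSpace X] {A : Set X} (hAcl : IsClosed A)
    {g : X → ℝ} (hg : UpperSemicontinuousOn g A) (r : ℝ) :
    IsClosed (A ∩ {x | r ≤ g x}) := by
  refine isClosed_of_closure_subset ?_
  intro x hx
  have hxA : x ∈ A := hAcl.closure_subset (closure_mono Set.inter_subset_left hx)
  refine ⟨hxA, ?_⟩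
  by_contra hr
  simp only [Set.mem_setOf_eq, not_le] at hr
  have h1 : ∀ᶠ z in nhdsWithin x A, g z < r := hg x hxA r hr
  have hne : (nhdsWithin x (A ∩ {x | r ≤ g x})).NeBot :=
    mem_closure_iff_nhdsWithin_neBot.1 hx
  have h2 : ∀ᶠ z in nhdsWithin x (A ∩ {x | r ≤ g x}), g z < r :=
    h1.filter_mono (nhdsWithin_mono x Set.inter_subset_left)
  have h3 : ∀ᶠ z in nhdsWithin x (A ∩ {x | r ≤ g x}), r ≤ g z :=
    eventually_nhdsWithin_of_forall fun z hz => hz.2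
  rcases (h2.and h3).exists with ⟨z, hz1, hz2⟩
  exact absurd hz2 (not_le.2 hz1)

/-- classical (Fan-type) minimax theorem for a real-valued bifunction,
concave-usc in `x` on the compact convex set `A`, convex in `y` on `B`;
the sup over `A` is attained. -/
theorem stmt6 {X Y : Type*} [NormedAddCommGroup X] [NormedSpace ℝ X]
    [NormedAddCommGroup Y] [NormedSpace ℝ Y]
    (f : X → Y → ℝ) (A : Set X) (B : Set Y)
    (hA : A.Nonempty) (hAc : IsCompact A) (hAconv : Convex ℝ A)
    (hB : B.Nonempty) (hBconv : Convex ℝ B)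
    (hconc : ∀ y ∈ B, ConcaveOn ℝ A (fun x => f x y))
    (husc : ∀ y ∈ B, UpperSemicontinuousOn (fun x => f x y) A)
    (hconv : ∀ x ∈ A, ConvexOn ℝ B (f x)) :
    ∃ x₀ ∈ A, (⨅ y ∈ B, (f x₀ y : EReal)) = (⨆ x ∈ A, ⨅ y ∈ B, (f x y : EReal)) ∧
      (⨆ x ∈ A, ⨅ y ∈ B, (f x y : EReal)) = ⨅ y ∈ B, ⨆ x ∈ A, (f x y : EReal) := by
  classical
  set c : EReal := ⨅ y ∈ B, ⨆ x ∈ A, (f x y : EReal) with hc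
  have hweak : (⨆ x ∈ A, ⨅ y ∈ B, (f x y : EReal)) ≤ c :=
    iSup₂_le fun x hx => iInf₂_mono fun y hy => le_iSup₂_of_le x hx le_rfl
  set ι' := ↥B × {r : ℝ // (r : EReal) < c} with hι'
  set Z : ι' → Set X := fun p => A ∩ {x | (p.2 : ℝ) ≤ f x p.1} with hZ
  have hZc : ∀ p, IsClosed (Z p) :=
    fun p => fan_closed_section hAc.isClosed (husc p.1 p.1.2) _
  have hfin : ∀ u : Finset ι', (A ∩ ⋂ p ∈ u, Z p).Nonempty := by
    intro u
    rcases u.eq_empty_or_nonempty with rfl | hu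
    · simpa using hA
    set r : ℝ := u.sup' hu (fun p => (p.2 : ℝ)) with hr
    have hrc : (r : EReal) < c := by
      obtain ⟨p, hp, hpr⟩ := Finset.exists_mem_eq_sup' hu (fun p : ι' => (p.2 : ℝ))
      rw [hr, hpr]
      exact p.2.2
    have H : ∀ z ∈ B, ∃ x ∈ A, r < f x z := by
      intro z hz
      have h1 : (r : EReal) < ⨆ x ∈ A, (f x z : EReal) := hrc.trans_le (iInf₂_le z hz)
      obtain ⟨x, hx⟩ := lt_iSup_iff.1 h1
      obtain ⟨hxa, hfx⟩ := lt_iSup_iff.1 hx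
      exact ⟨x, hxa, by exact_mod_cast hfx⟩
    obtain ⟨x, hx, hall⟩ := fan_finlem f A B hA hAconv hBconv hconc hconv
      (fun q : {p : ι' // p ∈ u} => ((q.1.1 : Y))) (fun q => q.1.1.2) r H
    refine ⟨x, hx, Set.mem_iInter₂.2 fun p hp => ⟨hx, ?_⟩⟩
    exact le_trans (Finset.le_sup' (fun p : ι' => (p.2 : ℝ)) hp) (hall ⟨p, hp⟩).le
  obtain ⟨x₀, hx₀A, hx₀⟩ := hAc.inter_iInter_nonempty Z hZc hfin
  have hge : c ≤ ⨅ y ∈ B, (f x₀ y : EReal) := by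
    refine le_iInf₂ fun y hy => ?_
    by_contra h
    push_neg at h
    obtain ⟨q, hq1, hq2⟩ := EReal.exists_between_coe_real h
    have hm := Set.mem_iInter.1 hx₀ ⟨⟨y, hy⟩, ⟨q, hq2⟩⟩
    exact absurd hq1 (not_lt.2 (by exact_mod_cast hm.2))
  have h1 : (⨅ y ∈ B, (f x₀ y : EReal)) ≤ ⨆ x ∈ A, ⨅ y ∈ B, (f x y : EReal) :=
    le_iSup₂_of_le x₀ hx₀A le_rfl
  have heq1 : (⨆ x ∈ A, ⨅ y ∈ B, (f x y : EReal)) = c :=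
    le_antisymm hweak (hge.trans h1)
  exact ⟨x₀, hx₀A, le_antisymm (heq1 ▸ hweak.trans' h1) (heq1 ▸ hge), heq1⟩
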